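/- Let φ(x) = ln|x - M| for a fixed point M ∈ ℝⁿ, defined on an open set not containing M. Let a(x,ξ) = |ξ|² - |∇φ(x)|² and b(x,ξ) = 2∇φ(x)·ξ. Then φ is a limiting Carleman weight: ∇φ(x) ≠ 0 everywhere on the domain, and the Poisson bracket {a,b}(x,ξ) vanishes at every point (x,ξ) where a(x,ξ) = 0 and b(x,ξ) = 0. -/

import Mathlib

open scoped RealInnerProductSpace

noncomputable section

/-- Poisson bracket of two functions a, b : ℝⁿ × ℝⁿ → ℝ (position × frequency):
    {a,b}(x,ξ) = ∇_ξ a · ∇_x b - ∇_x a · ∇_ξ b. -/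
def poissonBracket {n : ℕ}
    (a b : EuclideanSpace ℝ (Fin n) → EuclideanSpace ℝ (Fin n) → ℝ)
    (x ξ : EuclideanSpace ℝ (Fin n)) : ℝ :=
  ⟪gradient (a x) ξ, gradient (fun y => b y ξ) x⟫ -
    ⟪gradient (fun y => a y ξ) x, gradient (b x) ξ⟫

section Helpers

variable {F : Type*} [NormedAddCommGroup F] [InnerProductSpace ℝ F] [CompleteSpace F]

lemma hasGradientAt_of_fderiv' {f : F → ℝ} {L : F →L[ℝ] ℝ} {v x : F}
    (h : HasFDerivAt f L x) (hv : ∀ y, L y = ⟪v, y⟫) : HasGradientAt f v x := by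
  have hL : (InnerProductSpace.toDual ℝ F v : F →L[ℝ] ℝ) = L :=
    ContinuousLinearMap.ext fun y => by rw [InnerProductSpace.toDual_apply_apply, hv]
  rw [hasGradientAt_iff_hasFDerivAt, hL]
  exact h

lemma hasGradientAt_comp_deriv' {f : F → ℝ} {h : ℝ → ℝ} {v : F} {c : ℝ} {x : F}
    (hf : HasGradientAt f v x) (hh : HasDerivAt h c (f x)) :
    HasGradientAt (fun y => h (f y)) (c • v) x := by
  have := hh.comp_hasFDerivAt x hf.hasFDerivAt
  refine hasGradientAt_of_fderiv' this fun y => ?_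
  simp [InnerProductSpace.toDual_apply_apply, real_inner_smul_left, mul_comm]

lemma hasGradientAt_normSq_sub' (M x : F) :
    HasGradientAt (fun y => ‖y - M‖ ^ 2) ((2 : ℝ) • (x - M)) x := by
  have hd : HasFDerivAt (fun y : F => y - M) (ContinuousLinearMap.id ℝ F) x :=
    (hasFDerivAt_id x).sub_const M
  have h := hd.inner ℝ hd
  have h2 : HasGradientAt (fun y => ⟪y - M, y - M⟫) ((2 : ℝ) • (x - M)) x := by
    refine hasGradientAt_of_fderiv' h fun y => ?_
    simp [fderivInnerCLM_apply, real_inner_smul_left, real_inner_comm (x - M) y]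
    ring
  refine h2.congr_of_eventuallyEq (Filter.Eventually.of_forall fun y => ?_)
  exact (real_inner_self_eq_norm_sq (y - M)).symm

lemma hasGradientAt_inner_shift' (M ξ x : F) :
    HasGradientAt (fun y => ⟪y - M, ξ⟫) ξ x := by
  have hd : HasFDerivAt (fun y : F => y - M) (ContinuousLinearMap.id ℝ F) x :=
    (hasFDerivAt_id x).sub_const M
  have h := hd.inner ℝ (hasFDerivAt_const ξ x)
  refine hasGradientAt_of_fderiv' h fun y => ?_
  simp [fderivInnerCLM_apply, real_inner_comm ξ y]

lemma hasGradientAt_inv_normSq' {M x : F} (hx : x ≠ M) :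
    HasGradientAt (fun z => (‖z - M‖ ^ 2)⁻¹)
      ((-((‖x - M‖ ^ 2) ^ 2)⁻¹) • ((2 : ℝ) • (x - M))) x := by
  have hr : ‖x - M‖ ^ 2 ≠ 0 := pow_ne_zero _ (norm_ne_zero_iff.2 (sub_ne_zero.2 hx))
  exact hasGradientAt_comp_deriv' (hasGradientAt_normSq_sub' M x) (hasDerivAt_inv hr)

lemma hasGradientAt_log_normSq' {M x : F} (hx : x ≠ M) :
    HasGradientAt (fun z => Real.log ‖z - M‖) ((‖x - M‖ ^ 2)⁻¹ • (x - M)) x := by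
  have hr : ‖x - M‖ ^ 2 ≠ 0 := pow_ne_zero _ (norm_ne_zero_iff.2 (sub_ne_zero.2 hx))
  have h2 : HasDerivAt (fun t : ℝ => (1 / 2) * Real.log t) ((1 / 2) * (‖x - M‖ ^ 2)⁻¹)
      (‖x - M‖ ^ 2) := (Real.hasDerivAt_log hr).const_mul (1 / 2)
  have h3 := hasGradientAt_comp_deriv' (hasGradientAt_normSq_sub' M x) h2
  have heq : (fun z : F => Real.log ‖z - M‖) = fun z => (1 / 2) * Real.log (‖z - M‖ ^ 2) := by
    funext z
    rw [Real.log_pow]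
    push_cast
    ring
  rw [heq]
  convert h3 using 1
  rw [smul_smul]
  congr 1
  ring

end Helpers

/- STATEMENT 0: φ(x) = ln|x-M| is a limiting Carleman weight: ∇φ ≠ 0 on any open set
   avoiding M, and with a(x,ξ) = |ξ|² - |∇φ(x)|², b(x,ξ) = 2∇φ(x)·ξ, the Poisson bracket
   {a,b} vanishes on {a = b = 0}. -/
theorem log_dist_is_limiting_carleman_weight {n : ℕ}
    (M : EuclideanSpace ℝ (Fin n)) (U : Set (EuclideanSpace ℝ (Fin n)))
    (hU : IsOpen U) (hM : M ∉ U)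
    (φ : EuclideanSpace ℝ (Fin n) → ℝ)
    (hφ : ∀ x, φ x = Real.log ‖x - M‖)
    (a b : EuclideanSpace ℝ (Fin n) → EuclideanSpace ℝ (Fin n) → ℝ)
    (ha : ∀ x ξ, a x ξ = ‖ξ‖ ^ 2 - ‖gradient φ x‖ ^ 2)
    (hb : ∀ x ξ, b x ξ = 2 * ⟪gradient φ x, ξ⟫) :
    ∀ x ∈ U, gradient φ x ≠ 0 ∧
      ∀ ξ : EuclideanSpace ℝ (Fin n), a x ξ = 0 → b x ξ = 0 →
        poissonBracket a b x ξ = 0 := by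
  intro x hxU
  have hφfun : φ = fun z => Real.log ‖z - M‖ := funext hφ
  have hx : x ≠ M := fun h => hM (h ▸ hxU)
  -- gradient of φ at any point y ≠ M
  have hgs : ∀ y : EuclideanSpace ℝ (Fin n), y ≠ M →
      HasGradientAt φ ((‖y - M‖ ^ 2)⁻¹ • (y - M)) y := by
    intro y hy
    rw [hφfun]
    exact hasGradientAt_log_normSq' hy
  have hgrad : ∀ y : EuclideanSpace ℝ (Fin n), y ≠ M →
      gradient φ y = (‖y - M‖ ^ 2)⁻¹ • (y - M) := fun y hy => (hgs y hy).gradient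
  set r2 : ℝ := ‖x - M‖ ^ 2 with hr2
  have hr : r2 ≠ 0 := pow_ne_zero _ (norm_ne_zero_iff.2 (sub_ne_zero.2 hx))
  have hr0 : 0 < r2 := lt_of_le_of_ne (sq_nonneg _) (Ne.symm hr)
  set u : EuclideanSpace ℝ (Fin n) := x - M with hu
  have hgx : gradient φ x = r2⁻¹ • u := hgrad x hx
  have hgxne : gradient φ x ≠ 0 := by
    rw [hgx]
    simp only [smul_ne_zero_iff]
    exact ⟨inv_ne_zero hr, sub_ne_zero.2 hx⟩
  refine ⟨hgxne, fun ξ haξ hbξ => ?_⟩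
  -- consequences of a = 0 and b = 0
  have hnormgrad : ‖gradient φ x‖ ^ 2 = r2⁻¹ := by
    rw [hgx, norm_smul]
    rw [mul_pow, ← hr2]
    rw [Real.norm_eq_abs, sq_abs]
    field_simp
  have hξnorm : ‖ξ‖ ^ 2 = r2⁻¹ := by
    have := ha x ξ
    rw [haξ] at this  -- 0 = ‖ξ‖^2 - ‖grad‖^2 ... careful direction
    rw [hnormgrad] at this
    linarith [this]
  have huξ : ⟪u, ξ⟫ = 0 := by
    have h1 := hb x ξ
    rw [hbξ, hgx, real_inner_smul_left] at h1
    have : ⟪u, ξ⟫ * r2⁻¹ = 0 := by linarith [h1]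
    rcases mul_eq_zero.1 this with h | h
    · exact h
    · exact absurd h (inv_ne_zero hr)
  have hev : ∀ᶠ y in nhds x, y ≠ M :=
    IsOpen.eventually_mem isOpen_compl_singleton (Set.mem_compl_singleton_iff.mpr hx)
  -- gradient in ξ of a x
  have hGaξ : gradient (a x) ξ = (2 : ℝ) • ξ := by
    have hfun : a x = fun η => ‖η‖ ^ 2 - ‖gradient φ x‖ ^ 2 := funext (ha x)
    have h1 : HasGradientAt (fun η : EuclideanSpace ℝ (Fin n) => ‖η‖ ^ 2)
        ((2 : ℝ) • ξ) ξ := by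
      have := hasGradientAt_normSq_sub' (0 : EuclideanSpace ℝ (Fin n)) ξ
      simpa using this
    have h2 : HasDerivAt (fun t : ℝ => t - ‖gradient φ x‖ ^ 2) 1 (‖ξ‖ ^ 2) :=
      (hasDerivAt_id _).sub_const _
    have h3 := hasGradientAt_comp_deriv' h1 h2
    rw [hfun]
    have := h3.gradient
    simpa using this
  -- gradient in ξ of b x
  have hGbξ : gradient (b x) ξ = (2 : ℝ) • gradient φ x := by
    have h1 : HasGradientAt (fun η : EuclideanSpace ℝ (Fin n) => ⟪gradient φ x, η⟫)
        (gradient φ x) ξ := by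
      have := hasGradientAt_inner_shift' (0 : EuclideanSpace ℝ (Fin n)) (gradient φ x) ξ
      have heq : (fun η : EuclideanSpace ℝ (Fin n) => ⟪η - 0, gradient φ x⟫)
          = fun η => ⟪gradient φ x, η⟫ := by
        funext η; rw [sub_zero, real_inner_comm]
      rwa [heq] at this
    have h2 : HasDerivAt (fun t : ℝ => 2 * t) 2 (⟪gradient φ x, ξ⟫) := by
      simpa using (hasDerivAt_id (⟪gradient φ x, ξ⟫ : ℝ)).const_mul (2 : ℝ)
    have h3 := hasGradientAt_comp_deriv' h1 h2
    have hfun : b x = fun η => 2 * ⟪gradient φ x, η⟫ := funext (hb x)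
    rw [hfun]
    exact h3.gradient
  -- gradient in x of a · ξ
  have hGax : gradient (fun y => a y ξ) x = ((r2 ^ 2)⁻¹) • ((2 : ℝ) • u) := by
    have hevq : (fun y => a y ξ) =ᶠ[nhds x] fun y => ‖ξ‖ ^ 2 - (‖y - M‖ ^ 2)⁻¹ := by
      filter_upwards [hev] with y hy
      have hyr : ‖y - M‖ ^ 2 ≠ 0 := pow_ne_zero _ (norm_ne_zero_iff.2 (sub_ne_zero.2 hy))
      rw [ha y ξ, hgrad y hy, norm_smul, mul_pow, Real.norm_eq_abs, sq_abs]
      congr 1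
      field_simp
    have h1 := hasGradientAt_inv_normSq' hx
    have h2 : HasDerivAt (fun t : ℝ => ‖ξ‖ ^ 2 - t) (-1) ((‖x - M‖ ^ 2)⁻¹) :=
      (hasDerivAt_id _).const_sub _
    have h3 := hasGradientAt_comp_deriv' h1 h2
    have h4 := h3.congr_of_eventuallyEq hevq
    rw [h4.gradient, ← hu, hr2]
    module
  -- gradient in x of b · ξ
  have hGbx : gradient (fun y => b y ξ) x = (2 : ℝ) • (r2⁻¹ • ξ) := by
    have hevq : (fun y => b y ξ) =ᶠ[nhds x]
        fun y => 2 * ((‖y - M‖ ^ 2)⁻¹ * ⟪y - M, ξ⟫) := by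
      filter_upwards [hev] with y hy
      rw [hb y ξ, hgrad y hy, real_inner_smul_left]
    have hc := hasGradientAt_inv_normSq' hx
    have hd := hasGradientAt_inner_shift' M ξ x
    have hmul := hc.hasFDerivAt.mul hd.hasFDerivAt
    have h1 : HasGradientAt (fun y => (‖y - M‖ ^ 2)⁻¹ * ⟪y - M, ξ⟫)
        ((‖x - M‖ ^ 2)⁻¹ • ξ + ⟪x - M, ξ⟫ • ((-((‖x - M‖ ^ 2) ^ 2)⁻¹) • ((2 : ℝ) • (x - M)))) x := by
      refine hasGradientAt_of_fderiv' hmul fun y => ?_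
      simp only [ContinuousLinearMap.add_apply, ContinuousLinearMap.coe_smul', Pi.smul_apply,
        smul_eq_mul, InnerProductSpace.toDual_apply_apply, inner_add_left, real_inner_smul_left]
    have h2 : HasDerivAt (fun t : ℝ => 2 * t) 2 ((‖x - M‖ ^ 2)⁻¹ * ⟪x - M, ξ⟫) := by
      simpa using (hasDerivAt_id ((‖x - M‖ ^ 2)⁻¹ * ⟪x - M, ξ⟫ : ℝ)).const_mul (2 : ℝ)
    have h3 := hasGradientAt_comp_deriv' h1 h2
    have h4 := h3.congr_of_eventuallyEq hevq
    rw [h4.gradient, ← hu, huξ, zero_smul, add_zero, ← hr2]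
  -- final computation
  rw [poissonBracket, hGaξ, hGbξ, hGax, hGbx, hgx]
  simp only [real_inner_smul_left, real_inner_smul_right, real_inner_self_eq_norm_sq, ← hr2,
    hξnorm, huξ, real_inner_comm u ξ]
  field_simp
  ring
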